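/- Let R be a field of positive characteristic p, let G be a finite group whose order is divisible by p, and let H be a subgroup of G whose order is not divisible by p. Then the Jacobson radical of the endomorphism ring End_{RG}(Ind_H^G(R)) is nonzero. -/

import Mathlib

open CategoryTheory

/-- Let `R` be a field of positive characteristic `p`, `G` a finite
group with `p ∣ |G|` and `H ≤ G` with `p ∤ |H|`.  Then the Jacobson radical of
`End_{RG}(Ind_H^G R)` is nonzero.  Here `Ind_H^G R` is realized (as in the
statement's context) as the permutation module `R[G/H]`, i.e. the representation
of `G` on the free `R`-module on the cosets `G ⧸ H`, and `End_{RG}` is its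
endomorphism ring in the category `Rep R G` of `R`-linear representations. -/
theorem stmt13 {R : Type} [Field R] {p : ℕ} (hp : p.Prime) [CharP R p]
    {G : Type} [Group G] [Finite G] (H : Subgroup G)
    (hG : p ∣ Nat.card G) (hH : ¬ p ∣ Nat.card ↥H) :
    (⊥ : Ideal (End (Rep.of (Representation.ofMulAction R G (G ⧸ H))))).jacobson ≠ ⊥ := by
  classical
  have : Fintype G := Fintype.ofFinite G
  have : Fintype (G ⧸ H) := Fintype.ofFinite _
  set X : Rep R G := Rep.of (Representation.ofMulAction R G (G ⧸ H)) with hX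
  -- the "sum of coefficients" functional
  set s : (MonoidAlgebra R (G ⧸ H)) →ₗ[R] R := Finsupp.linearCombination R (fun _ => (1 : R)) ∘ₗ
    (MonoidAlgebra.coeffLinearEquiv R).toLinearMap with hs
  -- the norm element: sum of all cosets
  set N : MonoidAlgebra R (G ⧸ H) := ∑ x : G ⧸ H, MonoidAlgebra.single x (1 : R) with hN
  have hsingle : ∀ (x : G ⧸ H) (r : R), s (MonoidAlgebra.single x r) = r := by
    intro x r
    simp [hs, MonoidAlgebra.coeffLinearEquiv, MonoidAlgebra.coeff_single]
  have hNapp : ∀ y : G ⧸ H, N.coeff y = 1 := by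
    intro y
    rw [hN]
    rw [MonoidAlgebra.coeff_sum, Finsupp.finset_sum_apply]
    simp [MonoidAlgebra.coeff_single, Finsupp.single_apply]
  have hcard : ((Fintype.card (G ⧸ H) : R)) = 0 := by
    have h1 : Nat.card G = Nat.card (G ⧸ H) * Nat.card H :=
      Subgroup.card_eq_card_quotient_mul_card_subgroup H
    have h2 : p ∣ Nat.card (G ⧸ H) := by
      rcases (hp.dvd_mul.mp (h1 ▸ hG)) with h | h
      · exact h
      · exact absurd h hH
    rw [Nat.card_eq_fintype_card] at h2
    exact (CharP.cast_eq_zero_iff R p _).mpr h2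
  have hssum : ∀ v : MonoidAlgebra R (G ⧸ H), s v = ∑ y : G ⧸ H, v.coeff y := by
    intro v
    rw [hs, LinearMap.comp_apply, Finsupp.linearCombination_apply, Finsupp.sum_fintype]
    · simp [MonoidAlgebra.coeffLinearEquiv]
    · simp
  have hsN : s N = 0 := by
    rw [hssum]
    simp only [hNapp]
    rw [Finset.sum_const, Finset.card_univ, nsmul_eq_mul, mul_one, hcard]
  have hNinv : ∀ g : G, (Representation.ofMulAction R G (G ⧸ H)) g N = N := by
    intro g
    refine MonoidAlgebra.ext (Finsupp.ext fun y => ?_)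
    rw [Representation.coeff_ofMulAction g N y, hNapp, hNapp]
  have hsinv : ∀ (g : G) (v : MonoidAlgebra R (G ⧸ H)),
      s ((Representation.ofMulAction R G (G ⧸ H)) g v) = s v := by
    intro g v
    induction v using MonoidAlgebra.induction_linear with
    | zero => simp
    | add f g hf hg => simp only [map_add, hf, hg]
    | single a b =>
        rw [Representation.ofMulAction_single g a b, hsingle, hsingle]
  -- the endomorphism T v = (s v) • N
  set T : (MonoidAlgebra R (G ⧸ H)) →ₗ[R] (MonoidAlgebra R (G ⧸ H)) := s.smulRight N with hT
  have hTapp : ∀ v, T v = s v • N := fun v => rfl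
  set t : End X := Rep.ofHom ⟨T, by
    intro g
    refine LinearMap.ext fun v => ?_
    show T ((Representation.ofMulAction R G (G ⧸ H)) g v) =
      (Representation.ofMulAction R G (G ⧸ H)) g (T v)
    rw [hTapp, hTapp, hsinv, map_smul, hNinv]⟩ with ht
  have ht0 : t ≠ 0 := by
    intro h
    have h1 : t.hom = (0 : X ⟶ X).hom := by rw [h]
    rw [Rep.zero_hom] at h1
    have h2 : T = 0 := congrArg Representation.IntertwiningMap.toLinearMap h1
    have h3 : T (MonoidAlgebra.single ((1 : G) : G ⧸ H) 1) = 0 := by rw [h2]; rfl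
    rw [hTapp, hsingle, one_smul] at h3
    have h4 := congrArg (fun f => MonoidAlgebra.coeff f ((1 : G) : G ⧸ H)) h3
    simp only [hNapp] at h4
    exact one_ne_zero h4
  -- an equivariant endomorphism sends N to a constant-coefficient vector
  have hinv : ∀ (A : (MonoidAlgebra R (G ⧸ H)) →ₗ[R] (MonoidAlgebra R (G ⧸ H))),
      (∀ (g : G) (v : MonoidAlgebra R (G ⧸ H)),
        A ((Representation.ofMulAction R G (G ⧸ H)) g v) =
          (Representation.ofMulAction R G (G ⧸ H)) g (A v)) → s (A N) = 0 := by
    intro A hA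
    set w : MonoidAlgebra R (G ⧸ H) := A N with hw
    have hwinv : ∀ g : G, (Representation.ofMulAction R G (G ⧸ H)) g w = w := by
      intro g
      rw [hw, ← hA g N, hNinv]
    have hconst : ∀ y : G ⧸ H, w.coeff y = w.coeff ((1 : G) : G ⧸ H) := by
      intro y
      obtain ⟨g, hg⟩ := MulAction.exists_smul_eq G ((1 : G) : G ⧸ H) y
      have h1 := congrArg (fun f => MonoidAlgebra.coeff f y) (hwinv g)
      rw [Representation.coeff_ofMulAction g w y] at h1
      rw [← h1, ← hg, inv_smul_smul]
    rw [hssum]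
    calc ∑ y : G ⧸ H, w.coeff y = ∑ _y : G ⧸ H, w.coeff ((1 : G) : G ⧸ H) :=
          Finset.sum_congr rfl fun y _ => hconst y
      _ = (Fintype.card (G ⧸ H) : R) * w.coeff ((1 : G) : G ⧸ H) := by
          rw [Finset.sum_const, Finset.card_univ, nsmul_eq_mul]
      _ = 0 := by rw [hcard, zero_mul]
  -- the key relation t * a * t = 0
  have htat : ∀ a : End X, t * a * t = 0 := by
    intro a
    set A : (MonoidAlgebra R (G ⧸ H)) →ₗ[R] (MonoidAlgebra R (G ⧸ H)) := a.hom.toLinearMap with hA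
    have hAcomm : ∀ (g : G) (v : MonoidAlgebra R (G ⧸ H)),
        A ((Representation.ofMulAction R G (G ⧸ H)) g v) =
          (Representation.ofMulAction R G (G ⧸ H)) g (A v) := fun g v =>
      Representation.IntertwiningMap.isIntertwining _ _ a.hom g v
    have hAN : s (A N) = 0 := hinv A hAcomm
    show t ≫ (a ≫ t) = 0
    refine Rep.hom_ext ?_
    rw [Rep.zero_hom]
    refine Representation.IntertwiningMap.ext (LinearMap.ext fun v => ?_)
    show T (A (T v)) = 0
    rw [hTapp, hTapp, map_smul, map_smul, hAN]
    simp
  -- t lies in every maximal left ideal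
  have hmem : t ∈ (⊥ : Ideal (End X)).jacobson := by
    rw [Ideal.jacobson]
    refine Submodule.mem_sInf.mpr ?_
    rintro M ⟨-, hM⟩
    by_contra htM
    have hlt : M < M ⊔ Ideal.span {t} := lt_of_le_of_ne le_sup_left (by
      intro h
      exact htM (h ▸ Submodule.mem_sup_right (Submodule.mem_span_singleton_self t)))
    have htop : M ⊔ Ideal.span {t} = ⊤ := hM.1.2 _ hlt
    have h1 : (1 : End X) ∈ M ⊔ Ideal.span {t} := htop ▸ Submodule.mem_top
    obtain ⟨m, hm, x, hx, hmx⟩ := Submodule.mem_sup.mp h1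
    obtain ⟨a, rfl⟩ := Submodule.mem_span_singleton.mp hx
    have hx2 : (a • t) * (a • t) = 0 := by
      rw [smul_eq_mul, mul_assoc a t (a * t), ← mul_assoc t a t, htat a, mul_zero]
    have hm' : m = 1 - a • t := eq_sub_of_add_eq hmx
    have hu : IsUnit m := by
      rw [hm']
      refine ⟨⟨1 - a • t, 1 + a • t, ?_, ?_⟩, rfl⟩
      · have h : (1 - a • t) * (1 + a • t) = 1 - (a • t) * (a • t) := by noncomm_ring
        rw [h, hx2, sub_zero]
      · have h : (1 + a • t) * (1 - a • t) = 1 - (a • t) * (a • t) := by noncomm_ring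
        rw [h, hx2, sub_zero]
    exact hM.ne_top (Ideal.eq_top_of_isUnit_mem M hm hu)
  intro hbot
  rw [hbot] at hmem
  exact ht0 (Submodule.mem_bot _ |>.mp hmem)
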